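/- Let X and Y be Banach spaces and let Z = X ⊕_∞ Y (direct sum with max norm). Then (x, y) is a semi denting point of B_Z if and only if x is a semi denting point of B_X and y is a semi denting point of B_Y. -/

import Mathlib

/-- A point `x₀` of the closed unit ball of `Z` is a *semi denting point* of `B_Z` if for every
`ε > 0` there is a slice `S(B_Z, f, δ) = {z ∈ B_Z : f z > ‖f‖ - δ}` contained in `B(x₀, ε)`. -/
def IsSemiDentingPointOfBall {Z : Type*} [NormedAddCommGroup Z] [NormedSpace ℝ Z] (x : Z) :
    Prop :=
  ‖x‖ ≤ 1 ∧ ∀ ε > (0 : ℝ), ∃ (f : Z →L[ℝ] ℝ) (δ : ℝ), 0 < δ ∧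
    {z : Z | ‖z‖ ≤ 1 ∧ f z > ‖f‖ - δ} ⊆ Metric.closedBall x ε

set_option linter.unusedSectionVars false

section Aux

variable {X Y : Type*} [NormedAddCommGroup X] [NormedSpace ℝ X]
  [NormedAddCommGroup Y] [NormedSpace ℝ Y]

/-- Nearly-norming vectors for a real functional. -/
lemma exists_near_norming {W : Type*} [NormedAddCommGroup W] [NormedSpace ℝ W]
    (g : W →L[ℝ] ℝ) {η : ℝ} (hη : 0 < η) : ∃ u : W, ‖u‖ ≤ 1 ∧ ‖g‖ - η < g u := by
  rcases lt_or_ge (‖g‖ - η) 0 with h | h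
  · exact ⟨0, by simp, by simpa using h⟩
  · obtain ⟨u, hu1, hu2⟩ := g.exists_lt_apply_of_lt_opNorm (show ‖g‖ - η < ‖g‖ by linarith)
    rcases le_or_gt 0 (g u) with hgu | hgu
    · exact ⟨u, hu1.le, by rwa [Real.norm_eq_abs, abs_of_nonneg hgu] at hu2⟩
    · refine ⟨-u, by simpa using hu1.le, ?_⟩
      rw [map_neg]
      rwa [Real.norm_eq_abs, abs_of_neg hgu] at hu2

noncomputable def inlZ : X →L[ℝ] WithLp ⊤ (X × Y) :=
  ((WithLp.prodContinuousLinearEquiv ⊤ ℝ X Y).symm : (X × Y) →L[ℝ] _).comp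
    (ContinuousLinearMap.inl ℝ X Y)

noncomputable def inrZ : Y →L[ℝ] WithLp ⊤ (X × Y) :=
  ((WithLp.prodContinuousLinearEquiv ⊤ ℝ X Y).symm : (X × Y) →L[ℝ] _).comp
    (ContinuousLinearMap.inr ℝ X Y)

lemma inlZ_apply (u : X) : (inlZ u : WithLp ⊤ (X × Y)) = (WithLp.equiv ⊤ (X × Y)).symm (u, 0) :=
  rfl

lemma inrZ_apply (v : Y) : (inrZ v : WithLp ⊤ (X × Y)) = (WithLp.equiv ⊤ (X × Y)).symm (0, v) :=
  rfl

lemma split (u : X) (v : Y) :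
    (WithLp.equiv ⊤ (X × Y)).symm (u, v) = inlZ u + inrZ v := by
  rw [inlZ_apply, inrZ_apply, WithLp.equiv_symm_apply, ← WithLp.toLp_add, Prod.mk_add_mk, add_zero, zero_add]

lemma norm_symm_pair (u : X) (v : Y) :
    ‖(WithLp.equiv ⊤ (X × Y)).symm (u, v)‖ = max ‖u‖ ‖v‖ := by
  rw [WithLp.equiv_symm_apply, WithLp.prod_norm_toLp, Prod.norm_def]

lemma apply_split (f : WithLp ⊤ (X × Y) →L[ℝ] ℝ) (u : X) (v : Y) :
    f ((WithLp.equiv ⊤ (X × Y)).symm (u, v)) = f.comp inlZ u + f.comp inrZ v := by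
  rw [split, map_add]; rfl

lemma surj_pair (z : WithLp ⊤ (X × Y)) :
    ∃ u v, z = (WithLp.equiv ⊤ (X × Y)).symm (u, v) :=
  ⟨(WithLp.equiv ⊤ (X × Y) z).1, (WithLp.equiv ⊤ (X × Y) z).2, by rw [Prod.mk.eta, Equiv.symm_apply_apply]⟩

lemma opNorm_eq_add (f : WithLp ⊤ (X × Y) →L[ℝ] ℝ) :
    ‖f‖ = ‖f.comp inlZ‖ + ‖f.comp inrZ‖ := by
  set f₁ := f.comp (inlZ : X →L[ℝ] WithLp ⊤ (X × Y))
  set f₂ := f.comp (inrZ : Y →L[ℝ] WithLp ⊤ (X × Y))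
  apply le_antisymm
  · apply f.opNorm_le_bound (by positivity)
    intro z
    obtain ⟨u, v, rfl⟩ := surj_pair z
    rw [apply_split, norm_symm_pair]
    have h1 : ‖f₁ u‖ ≤ ‖f₁‖ * ‖u‖ := f₁.le_opNorm u
    have h2 : ‖f₂ v‖ ≤ ‖f₂‖ * ‖v‖ := f₂.le_opNorm v
    have hu : ‖u‖ ≤ max ‖u‖ ‖v‖ := le_max_left _ _
    have hv : ‖v‖ ≤ max ‖u‖ ‖v‖ := le_max_right _ _
    calc ‖f₁ u + f₂ v‖ ≤ ‖f₁ u‖ + ‖f₂ v‖ := norm_add_le _ _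
      _ ≤ ‖f₁‖ * ‖u‖ + ‖f₂‖ * ‖v‖ := by linarith
      _ ≤ (‖f₁‖ + ‖f₂‖) * max ‖u‖ ‖v‖ := by
          have := f₁.opNorm_nonneg
          have := f₂.opNorm_nonneg
          nlinarith
  · refine le_of_forall_pos_le_add fun η hη => ?_
    obtain ⟨u, hu1, hu2⟩ := exists_near_norming f₁ (half_pos hη)
    obtain ⟨v, hv1, hv2⟩ := exists_near_norming f₂ (half_pos hη)
    have hz : ‖(WithLp.equiv ⊤ (X × Y)).symm (u, v)‖ ≤ 1 := by
      rw [norm_symm_pair]; exact max_le hu1 hv1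
    have := (f.le_opNorm ((WithLp.equiv ⊤ (X × Y)).symm (u, v))).trans
      (mul_le_of_le_one_right f.opNorm_nonneg hz)
    rw [apply_split] at this
    have hle : f₁ u + f₂ v ≤ ‖f‖ := (le_abs_self _).trans this
    linarith

end Aux

/-- For Banach spaces `X`, `Y` and `Z = X ⊕_∞ Y` (max norm), `(x, y)` is a semi denting point
of `B_Z` iff `x` is a semi denting point of `B_X` and `y` is a semi denting point of `B_Y`. -/

theorem isSemiDentingPointOfBall_prod_top_iff
    {X Y : Type*} [NormedAddCommGroup X] [NormedSpace ℝ X] [CompleteSpace X]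
    [NormedAddCommGroup Y] [NormedSpace ℝ Y] [CompleteSpace Y] (x : X) (y : Y) :
    IsSemiDentingPointOfBall ((WithLp.equiv ⊤ (X × Y)).symm (x, y)) ↔
      IsSemiDentingPointOfBall x ∧ IsSemiDentingPointOfBall y := by
  constructor
  · rintro ⟨hb, hs⟩
    rw [norm_symm_pair, max_le_iff] at hb
    constructor
    · refine ⟨hb.1, fun ε hε => ?_⟩
      obtain ⟨f, δ, hδ, hsub⟩ := hs ε hε
      refine ⟨f.comp inlZ, δ, hδ, fun u hu => ?_⟩
      obtain ⟨hu1, hu2⟩ := hu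
      set f₁ := f.comp (inlZ : X →L[ℝ] WithLp ⊤ (X × Y))
      set f₂ := f.comp (inrZ : Y →L[ℝ] WithLp ⊤ (X × Y))
      have hγ : (0:ℝ) < f₁ u - (‖f₁‖ - δ) := by linarith [hu2]
      obtain ⟨v, hv1, hv2⟩ := exists_near_norming f₂ hγ
      have hmem : (WithLp.equiv ⊤ (X × Y)).symm (u, v) ∈
          {z : WithLp ⊤ (X × Y) | ‖z‖ ≤ 1 ∧ f z > ‖f‖ - δ} := by
        refine ⟨by rw [norm_symm_pair]; exact max_le hu1 hv1, ?_⟩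
        rw [apply_split]
        have := opNorm_eq_add f
        linarith
      have := hsub hmem
      rw [Metric.mem_closedBall, dist_eq_norm, WithLp.equiv_symm_apply, ← WithLp.toLp_sub, Prod.mk_sub_mk,
        ← WithLp.equiv_symm_apply, norm_symm_pair] at this
      rw [Metric.mem_closedBall, dist_eq_norm]
      exact le_trans (le_max_left _ _) this
    · refine ⟨hb.2, fun ε hε => ?_⟩
      obtain ⟨f, δ, hδ, hsub⟩ := hs ε hε
      refine ⟨f.comp inrZ, δ, hδ, fun v hv => ?_⟩
      obtain ⟨hv1, hv2⟩ := hv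
      set f₁ := f.comp (inlZ : X →L[ℝ] WithLp ⊤ (X × Y))
      set f₂ := f.comp (inrZ : Y →L[ℝ] WithLp ⊤ (X × Y))
      have hγ : (0:ℝ) < f₂ v - (‖f₂‖ - δ) := by linarith [hv2]
      obtain ⟨u, hu1, hu2⟩ := exists_near_norming f₁ hγ
      have hmem : (WithLp.equiv ⊤ (X × Y)).symm (u, v) ∈
          {z : WithLp ⊤ (X × Y) | ‖z‖ ≤ 1 ∧ f z > ‖f‖ - δ} := by
        refine ⟨by rw [norm_symm_pair]; exact max_le hu1 hv1, ?_⟩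
        rw [apply_split]
        have := opNorm_eq_add f
        linarith
      have := hsub hmem
      rw [Metric.mem_closedBall, dist_eq_norm, WithLp.equiv_symm_apply, ← WithLp.toLp_sub, Prod.mk_sub_mk,
        ← WithLp.equiv_symm_apply, norm_symm_pair] at this
      rw [Metric.mem_closedBall, dist_eq_norm]
      exact le_trans (le_max_right _ _) this
  · rintro ⟨⟨hbx, hsx⟩, ⟨hby, hsy⟩⟩
    refine ⟨by rw [norm_symm_pair]; exact max_le hbx hby, fun ε hε => ?_⟩
    obtain ⟨f₁, δ₁, hδ₁, hsub₁⟩ := hsx ε hε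
    obtain ⟨f₂, δ₂, hδ₂, hsub₂⟩ := hsy ε hε
    set f : WithLp ⊤ (X × Y) →L[ℝ] ℝ :=
      (f₁.comp (ContinuousLinearMap.fst ℝ X Y) + f₂.comp (ContinuousLinearMap.snd ℝ X Y)).comp
        ((WithLp.prodContinuousLinearEquiv ⊤ ℝ X Y) : WithLp ⊤ (X × Y) →L[ℝ] (X × Y)) with hf
    have hfl : f.comp inlZ = f₁ := by
      ext u
      simp [hf, inlZ, ContinuousLinearMap.comp_apply]
    have hfr : f.comp inrZ = f₂ := by
      ext v
      simp [hf, inrZ, ContinuousLinearMap.comp_apply]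
    have hnorm : ‖f‖ = ‖f₁‖ + ‖f₂‖ := by
      rw [opNorm_eq_add f, hfl, hfr]
    refine ⟨f, min δ₁ δ₂, lt_min hδ₁ hδ₂, fun z hz => ?_⟩
    obtain ⟨u, v, rfl⟩ := surj_pair z
    obtain ⟨hz1, hz2⟩ := hz
    rw [norm_symm_pair, max_le_iff] at hz1
    have happ : f ((WithLp.equiv ⊤ (X × Y)).symm (u, v)) = f₁ u + f₂ v := by
      rw [apply_split, hfl, hfr]
    rw [happ, hnorm] at hz2
    have hf1u : f₁ u ≤ ‖f₁‖ := by
      have := (f₁.le_opNorm u).trans (mul_le_of_le_one_right f₁.opNorm_nonneg hz1.1)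
      exact (le_abs_self _).trans this
    have hf2v : f₂ v ≤ ‖f₂‖ := by
      have := (f₂.le_opNorm v).trans (mul_le_of_le_one_right f₂.opNorm_nonneg hz1.2)
      exact (le_abs_self _).trans this
    have hmin1 : min δ₁ δ₂ ≤ δ₁ := min_le_left _ _
    have hmin2 : min δ₁ δ₂ ≤ δ₂ := min_le_right _ _
    have hu : u ∈ Metric.closedBall x ε := hsub₁ ⟨hz1.1, by linarith⟩
    have hv : v ∈ Metric.closedBall y ε := hsub₂ ⟨hz1.2, by linarith⟩
    rw [Metric.mem_closedBall, dist_eq_norm] at hu hv ⊢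
    rw [WithLp.equiv_symm_apply, ← WithLp.toLp_sub, Prod.mk_sub_mk, ← WithLp.equiv_symm_apply, norm_symm_pair]
    exact max_le hu hv
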